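/- Let G be a nilpotent group (Group.IsNilpotent G) containing an element of infinite order (there exists g ∈ G with ¬ IsOfFinOrder g). Let n ≥ 1 and w ∈ FreeGroup (Fin n). Then w is an E-type iterated identity of G if and only if both of the following hold: (1) the exponent sum of the variable x₀ in w equals 0 (the homomorphism FreeGroup (Fin n) →* Multiplicative ℤ sending x₀ to Multiplicative.ofAdd 1 and x_j to 1 for j ≠ 0 maps w to 1), and (2) the word obtained from w by setting x₀ = 1 is an identity of G, i.e., FreeGroup.lift f w = 1 for every f : Fin n → G with f 0 = 1. -/

import Mathlib

noncomputable section

/-- The verbal map: evaluate `w` with the variable of index `0` set to `x`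
and the variable of index `i` set to `f i` for `i ≠ 0`. -/
def verbalMap {n : ℕ} [NeZero n] {G : Type*} [Group G] (w : FreeGroup (Fin n))
    (f : Fin n → G) : G → G :=
  fun x => FreeGroup.lift (Function.update f 0 x) w

/-- `w` is an E-type (Engel type) iterated identity of `G`. -/
def IsEIteratedIdentity {n : ℕ} [NeZero n] (w : FreeGroup (Fin n)) (G : Type*) [Group G] : Prop :=
  ∀ f : Fin n → G, ∃ d : ℕ, 1 ≤ d ∧ (verbalMap w f)^[d] (f 0) = 1

/-- `G` has iterational depth at most `D` with respect to `w`. -/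
def DepthAtMost {n : ℕ} [NeZero n] (w : FreeGroup (Fin n)) (G : Type*) [Group G] (D : ℕ) : Prop :=
  ∀ f : Fin n → G, ∃ d : ℕ, 1 ≤ d ∧ d ≤ D ∧ (verbalMap w f)^[d] (f 0) = 1

/-- The exponent-sum homomorphism of the variable `x_i`: it sends `x_i` to
`Multiplicative.ofAdd 1` and all other generators to `1`. -/
def expSumHom {n : ℕ} (i : Fin n) : FreeGroup (Fin n) →* Multiplicative ℤ :=
  FreeGroup.lift (fun j => if j = i then Multiplicative.ofAdd 1 else 1)

section Aux
variable {n : ℕ} [NeZero n]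

omit [NeZero n] in
lemma lift_comp {G H : Type*} [Group G] [Group H] (φ : G →* H) (f : Fin n → G)
    (w : FreeGroup (Fin n)) :
    φ (FreeGroup.lift f w) = FreeGroup.lift (φ ∘ f) w := by
  have h : φ.comp (FreeGroup.lift f) = FreeGroup.lift (φ ∘ f) :=
    FreeGroup.ext_hom _ _ (fun a => by simp)
  exact DFunLike.congr_fun h w

lemma lift_update_central {H : Type*} [Group H] (f : Fin n → H) (x : H)
    (hx : ∀ g : H, g * x = x * g) (w : FreeGroup (Fin n)) :
    FreeGroup.lift (Function.update f 0 x) w =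
      x ^ (Multiplicative.toAdd (expSumHom (0 : Fin n) w)) *
        FreeGroup.lift (Function.update f 0 1) w := by
  have hxc : ∀ (m : ℤ) (g : H), g * x ^ m = x ^ m * g := fun m g =>
    ((Commute.zpow_right (hx g) m)).eq
  induction w using FreeGroup.induction_on with
  | C1 => simp
  | of i =>
      have hp : (pure i : FreeGroup (Fin n)) = FreeGroup.of i := rfl
      by_cases hi : i = (0 : Fin n)
      · subst hi
        simp [expSumHom, FreeGroup.lift_apply_of, Function.update_self]
      · simp [expSumHom, FreeGroup.lift_apply_of, Function.update_of_ne hi, hi]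
  | inv_of i _ =>
      have hp : (pure i : FreeGroup (Fin n)) = FreeGroup.of i := rfl
      by_cases hi : i = (0 : Fin n)
      · subst hi
        simp [expSumHom, FreeGroup.lift_apply_of, Function.update_self]
      · simp [expSumHom, FreeGroup.lift_apply_of, Function.update_of_ne hi, hi]
  | mul a b ha hb =>
      rw [map_mul (FreeGroup.lift (Function.update f 0 x)), ha, hb,
        map_mul (FreeGroup.lift (Function.update f 0 1)),
        map_mul (expSumHom (0 : Fin n)), toAdd_mul, zpow_add]
      rw [mul_assoc]
      rw [show FreeGroup.lift (Function.update f 0 1) a *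
            (x ^ Multiplicative.toAdd ((expSumHom (0:Fin n)) b) *
              FreeGroup.lift (Function.update f 0 1) b) =
          x ^ Multiplicative.toAdd ((expSumHom (0:Fin n)) b) *
            (FreeGroup.lift (Function.update f 0 1) a *
              FreeGroup.lift (Function.update f 0 1) b) from by
        rw [← mul_assoc, hxc, mul_assoc]]
      rw [← mul_assoc]

open scoped commutatorElement in
/-- An element of `lowerCentralSeries G k` is central modulo `lowerCentralSeries G (k+1)`. -/
lemma central_mod_succ {G : Type*} [Group G] {k : ℕ} {v : G}
    (hv : v ∈ Subgroup.lowerCentralSeries (⊤ : Subgroup G) k)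
    (y : G ⧸ Subgroup.lowerCentralSeries (⊤ : Subgroup G) (k + 1)) :
    y * (QuotientGroup.mk' _ v) = (QuotientGroup.mk' _ v) * y := by
  induction y using QuotientGroup.induction_on with
  | H z =>
    have hmem : ⁅v, z⁆ ∈ Subgroup.lowerCentralSeries (⊤ : Subgroup G) (k + 1) := by
      rw [lowerCentralSeries_succ]
      exact Subgroup.subset_closure ⟨v, hv, z, Subgroup.mem_top z, rfl⟩
    have h1 : ⁅(QuotientGroup.mk' (Subgroup.lowerCentralSeries (⊤ : Subgroup G) (k+1))) v,
        (QuotientGroup.mk' (Subgroup.lowerCentralSeries (⊤ : Subgroup G) (k+1))) z⁆ = 1 := by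
      rw [← map_commutatorElement]
      exact (QuotientGroup.eq_one_iff _).mpr hmem
    exact (commutatorElement_eq_one_iff_mul_comm.mp h1).symm

end Aux

/-- For a nilpotent group with an element of infinite order, `w` is an E-type iterated
identity iff the exponent sum of `x₀` in `w` is `0` and the word obtained from `w` by
setting `x₀ = 1` is an identity of the group. -/
theorem nilpotent_iterated_identity_iff (G : Type*) [Group G] [Group.IsNilpotent G]
    (hinf : ∃ g : G, ¬ IsOfFinOrder g)
    (n : ℕ) [NeZero n] (w : FreeGroup (Fin n)) :
    IsEIteratedIdentity w G ↔
      (expSumHom (0 : Fin n) w = 1 ∧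
        ∀ f : Fin n → G, f 0 = 1 → FreeGroup.lift f w = 1) := by
  classical
  obtain ⟨c, hc⟩ := nilpotent_iff_lowerCentralSeries.mp ‹Group.IsNilpotent G›
  constructor
  · intro hE
    obtain ⟨g, hg⟩ := hinf
    -- exponent sum is zero
    have hs : expSumHom (0 : Fin n) w = 1 := by
      set f : Fin n → G := Function.update (fun _ => (1 : G)) 0 g with hf
      obtain ⟨d, hd1, hd⟩ := hE f
      set s : ℤ := Multiplicative.toAdd (expSumHom (0 : Fin n) w) with hsdef
      have hpow : ∀ x : G, verbalMap w f x = x ^ s := by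
        intro x
        show FreeGroup.lift (Function.update f 0 x) w = x ^ s
        have h1 : Function.update f 0 x = Function.update (fun _ => (1 : G)) 0 x := by
          rw [hf, Function.update_idem]
        have h2 : FreeGroup.lift (Function.update (fun _ => (1 : G)) 0 x) =
            (zpowersHom G x).comp (expSumHom (0 : Fin n)) := by
          apply FreeGroup.ext_hom; intro a
          by_cases ha : a = 0
          · subst ha
            simp [expSumHom, Function.update_self]
          · simp [expSumHom, ha, Function.update_of_ne ha]
        rw [h1, h2]
        rfl
      have hiter : ∀ m : ℕ, (verbalMap w f)^[m] g = g ^ (s ^ m) := by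
        intro m
        induction m with
        | zero => simp
        | succ m ih =>
            rw [Function.iterate_succ_apply', ih, hpow, ← zpow_mul, ← pow_succ]
      have hf0 : f 0 = g := Function.update_self _ _ _
      rw [hf0, hiter] at hd
      have hdvd : (orderOf g : ℤ) ∣ s ^ d := orderOf_dvd_iff_zpow_eq_one.mpr hd
      rw [orderOf_eq_zero hg] at hdvd
      have hs0 : s = 0 :=
        (pow_eq_zero_iff (by omega : d ≠ 0)).mp (by exact_mod_cast zero_dvd_iff.mp hdvd)
      have : Multiplicative.toAdd (expSumHom (0 : Fin n) w) = 0 := hs0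
      rw [← ofAdd_toAdd (expSumHom (0 : Fin n) w), this]
      rfl
    refine ⟨hs, ?_⟩
    intro f hf0
    by_contra hv
    set v := FreeGroup.lift f w with hvdef
    have hex : ∃ m, v ∉ Subgroup.lowerCentralSeries (⊤ : Subgroup G) m :=
      ⟨c, by rw [hc]; simpa using hv⟩
    set m := Nat.find hex with hmdef
    have hm : v ∉ Subgroup.lowerCentralSeries (⊤ : Subgroup G) m := Nat.find_spec hex
    have hmpos : m ≠ 0 := by
      intro h
      rw [h, lowerCentralSeries_zero] at hm
      exact hm (Subgroup.mem_top v)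
    obtain ⟨k, hk⟩ : ∃ k, m = k + 1 := ⟨m - 1, by omega⟩
    have hvk : v ∈ Subgroup.lowerCentralSeries (⊤ : Subgroup G) k := not_not.mp (Nat.find_min hex (by omega))
    have hvN : v ∉ Subgroup.lowerCentralSeries (⊤ : Subgroup G) (k + 1) := hk ▸ hm
    set π := QuotientGroup.mk' (Subgroup.lowerCentralSeries (⊤ : Subgroup G) (k + 1)) with hπ
    have hs0 : Multiplicative.toAdd (expSumHom (0 : Fin n) w) = 0 := by rw [hs]; rfl
    have key : ∀ x : G, π x = π v → π (verbalMap w f x) = π v := by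
      intro x hxv
      have hcx : ∀ y : G ⧸ Subgroup.lowerCentralSeries (⊤ : Subgroup G) (k + 1), y * π x = π x * y := by
        intro y
        rw [hxv]
        exact central_mod_succ hvk y
      show π (FreeGroup.lift (Function.update f 0 x) w) = π v
      rw [lift_comp π, Function.comp_update, lift_update_central _ _ hcx, hs0,
        zpow_zero, one_mul]
      have hupd : Function.update ((⇑π) ∘ f) 0 (1 : G ⧸ Subgroup.lowerCentralSeries (⊤ : Subgroup G) (k + 1)) =
          (⇑π) ∘ f := by
        rw [show (1 : G ⧸ Subgroup.lowerCentralSeries (⊤ : Subgroup G) (k + 1)) = ((⇑π) ∘ f) 0 from by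
          simp [hf0]; exact (map_one π).symm, Function.update_eq_self]
      rw [hupd, ← lift_comp]
    have hiter : ∀ d : ℕ, π ((verbalMap w f)^[d + 1] (f 0)) = π v := by
      intro d
      induction d with
      | zero =>
          show π (verbalMap w f (f 0)) = π v
          have : verbalMap w f (f 0) = v := by
            show FreeGroup.lift (Function.update f 0 (f 0)) w = v
            rw [Function.update_eq_self]
          rw [this]
      | succ d ih =>
          rw [Function.iterate_succ_apply']
          exact key _ ih
    obtain ⟨d, hd1, hd⟩ := hE f
    obtain ⟨e, rfl⟩ : ∃ e, d = e + 1 := ⟨d - 1, by omega⟩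
    have h1 := hiter e
    rw [hd, map_one] at h1
    exact hvN ((QuotientGroup.eq_one_iff v).mp h1.symm)
  · rintro ⟨hs, hid⟩ f
    have hs0 : Multiplicative.toAdd (expSumHom (0 : Fin n) w) = 0 := by rw [hs]; rfl
    have step : ∀ (k : ℕ) (x : G), x ∈ Subgroup.lowerCentralSeries (⊤ : Subgroup G) k →
        verbalMap w f x ∈ Subgroup.lowerCentralSeries (⊤ : Subgroup G) (k + 1) := by
      intro k x hx
      set π := QuotientGroup.mk' (Subgroup.lowerCentralSeries (⊤ : Subgroup G) (k + 1)) with hπ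
      have hcx : ∀ y : G ⧸ Subgroup.lowerCentralSeries (⊤ : Subgroup G) (k + 1), y * π x = π x * y :=
        central_mod_succ hx
      have h1 : π (verbalMap w f x) = 1 := by
        show π (FreeGroup.lift (Function.update f 0 x) w) = 1
        rw [lift_comp π, Function.comp_update, lift_update_central _ _ hcx, hs0,
          zpow_zero, one_mul]
        have hupd : Function.update ((⇑π) ∘ f) 0 (1 : G ⧸ Subgroup.lowerCentralSeries (⊤ : Subgroup G) (k + 1)) =
            (⇑π) ∘ Function.update f 0 1 := by
          rw [Function.comp_update, map_one]
        rw [hupd, ← lift_comp, hid (Function.update f 0 1) (Function.update_self _ _ _),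
          map_one]
      exact (QuotientGroup.eq_one_iff _).mp h1
    have hiter : ∀ d : ℕ, (verbalMap w f)^[d] (f 0) ∈ Subgroup.lowerCentralSeries (⊤ : Subgroup G) d := by
      intro d
      induction d with
      | zero => rw [lowerCentralSeries_zero]; exact Subgroup.mem_top _
      | succ d ih =>
          rw [Function.iterate_succ_apply']
          exact step d _ ih
    refine ⟨max c 1, le_max_right _ _, ?_⟩
    have h1 := hiter (max c 1)
    have h2 : Subgroup.lowerCentralSeries (⊤ : Subgroup G) (max c 1) ≤ Subgroup.lowerCentralSeries (⊤ : Subgroup G) c :=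
      lowerCentralSeries_antitone _ (le_max_left _ _)
    rw [hc] at h2
    simpa using h2 h1
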